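/- If each vertex of a tournament is coloured independently and uniformly at random with one of 3 colours, then the expected number of vertices x for which more than d^+(x)/2 of the out-neighbours of x receive the same colour as x is less than 206. -/

import Mathlib

open Finset in

lemma count_le {V : Type*} [Fintype V] [DecidableEq V] (x : V) (a : Fin 3) (S B : Finset V)
    (hxS : x ∉ S) (hxB : x ∉ B) (hSB : Disjoint S B) :
    (univ.filter (fun c : V → Fin 3 =>
        c x = a ∧ (∀ y ∈ S, c y = a) ∧ (∀ y ∈ B, c y ≠ a))).card
      ≤ 2 ^ B.card * 3 ^ (Fintype.card V - (S.card + B.card + 1)) := by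
  classical
  set t : V → Finset (Fin 3) :=
    fun y => if y ∈ B then ({a} : Finset (Fin 3))ᶜ else if y ∈ insert x S then {a} else univ with ht
  have hsub : (univ.filter (fun c : V → Fin 3 =>
      c x = a ∧ (∀ y ∈ S, c y = a) ∧ (∀ y ∈ B, c y ≠ a))) ⊆ Fintype.piFinset t := by
    intro c hc
    simp only [mem_filter, mem_univ, true_and] at hc
    obtain ⟨h1, h2, h3⟩ := hc
    rw [Fintype.mem_piFinset]
    intro y
    simp only [ht]
    split_ifs with hyB hyS
    · simp [h3 y hyB]
    · have hya : c y = a := by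
        rcases mem_insert.mp hyS with h | h
        · subst h; exact h1
        · exact h2 y h
      simp [hya]
    · simp
  have hIsub : insert x S ⊆ univ \ B := by
    intro y hy
    rcases mem_insert.mp hy with h | h
    · subst h; simp [hxB]
    · simp [disjoint_left.mp hSB h]
  have hcard : ∀ y, (t y).card = if y ∈ B then 2 else if y ∈ insert x S then 1 else 3 := by
    intro y
    simp only [ht]
    split_ifs <;> simp [Finset.card_compl]
  calc (univ.filter (fun c : V → Fin 3 =>
      c x = a ∧ (∀ y ∈ S, c y = a) ∧ (∀ y ∈ B, c y ≠ a))).card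
      ≤ (Fintype.piFinset t).card := card_le_card hsub
    _ = ∏ y, (t y).card := Fintype.card_piFinset t
    _ = ∏ y, (if y ∈ B then 2 else if y ∈ insert x S then 1 else 3) :=
        prod_congr rfl (fun y _ => hcard y)
    _ = (∏ y ∈ univ \ B, (if y ∈ B then 2 else if y ∈ insert x S then 1 else 3)) *
        ∏ y ∈ B, (if y ∈ B then 2 else if y ∈ insert x S then 1 else 3) :=
        (prod_sdiff (subset_univ B)).symm
    _ ≤ 2 ^ B.card * 3 ^ (Fintype.card V - (S.card + B.card + 1)) := by
        have h1 : ∏ y ∈ B, (if y ∈ B then 2 else if y ∈ insert x S then 1 else 3) = 2 ^ B.card := by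
          rw [prod_congr rfl (fun y hy => if_pos hy), prod_const]
        have h2 : (∏ y ∈ univ \ B, (if y ∈ B then 2 else if y ∈ insert x S then 1 else 3))
            = ∏ y ∈ univ \ B, (if y ∈ insert x S then 1 else 3) := by
          refine prod_congr rfl fun y hy => ?_
          rw [if_neg (mem_sdiff.mp hy).2]
        rw [h1, h2, ← prod_sdiff hIsub]
        have h3 : ∏ y ∈ insert x S, (if y ∈ insert x S then 1 else 3) = 1 := by
          rw [prod_congr rfl (fun y hy => if_pos hy), prod_const, one_pow]
        have h4 : ∏ y ∈ (univ \ B) \ insert x S, (if y ∈ insert x S then 1 else 3)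
            = 3 ^ ((univ \ B) \ insert x S).card := by
          rw [prod_congr rfl (fun y hy => if_neg (mem_sdiff.mp hy).2), prod_const]
        rw [h3, h4, mul_one]
        have hc1 : ((univ \ B) \ insert x S).card
            = Fintype.card V - B.card - (S.card + 1) := by
          rw [card_sdiff_of_subset hIsub, card_sdiff_of_subset (subset_univ B), card_univ,
            card_insert_of_notMem hxS]
        rw [mul_comm]
        gcongr
        · omega
        · omega

open Finset in
lemma pow_step (A : ℝ) (hA1 : 1 ≤ A) (hA2 : 2 ≤ A ^ 2) (n d e : ℕ)
    (hed : 2 * e + 1 ≤ d) (hdn : d + 1 ≤ n) :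
    (3:ℝ) * (2 ^ e * 3 ^ (n - (d + 1))) ≤ 3 ^ n / A * (2 * A / 3) ^ d / 2 ^ d := by
  have hA0 : (0:ℝ) < A := lt_of_lt_of_le one_pos hA1
  have h2e : (2:ℝ) ^ e * A ≤ A ^ d :=
    calc (2:ℝ) ^ e * A ≤ (A ^ 2) ^ e * A := by
          exact mul_le_mul_of_nonneg_right (pow_le_pow_left₀ (by norm_num) hA2 e) hA0.le
      _ = A ^ (2 * e + 1) := by rw [← pow_mul, ← pow_succ]
      _ ≤ A ^ d := pow_le_pow_right₀ hA1 hed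
  have key : (2:ℝ) ^ e ≤ A ^ d / A := by rw [le_div_iff₀ hA0]; exact h2e
  have h3 : (3:ℝ) ^ n = 3 ^ (n - (d + 1)) * (3 ^ d * 3) := by
    rw [← pow_succ, ← pow_add]; congr 1; omega
  calc (3:ℝ) * (2 ^ e * 3 ^ (n - (d + 1))) = (2:ℝ) ^ e * (3 * 3 ^ (n - (d + 1))) := by ring
    _ ≤ (A ^ d / A) * (3 * 3 ^ (n - (d + 1))) :=
        mul_le_mul_of_nonneg_right key (by positivity)
    _ = 3 ^ n / A * (2 * A / 3) ^ d / 2 ^ d := by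
        rw [h3, div_pow, mul_pow]
        have h2d : (2:ℝ) ^ d ≠ 0 := by positivity
        have h3d : (3:ℝ) ^ d ≠ 0 := by positivity
        field_simp

open Finset in
lemma bad_count {V : Type*} [Fintype V] [DecidableEq V] (T : V → V → Prop) [DecidableRel T]
    (x : V) (hx : ¬ T x x) :
    ((univ.filter (fun c : V → Fin 3 =>
        (univ.filter (fun y => T x y)).card <
          2 * (univ.filter (fun y => T x y ∧ c y = c x)).card)).card : ℝ)
      ≤ 3 ^ Fintype.card V / (14143 / 10000) *
          (14143 / 15000) ^ (univ.filter (fun y => T x y)).card := by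
  classical
  set N : Finset V := univ.filter (fun y => T x y) with hN
  set d : ℕ := N.card with hd
  set n : ℕ := Fintype.card V with hn
  have hxN : x ∉ N := by simp [hN, hx]
  have hdn : d + 1 ≤ n := by
    have := card_le_card (subset_univ (insert x N))
    rwa [card_insert_of_notMem hxN, card_univ] at this
  set Ssets : Finset (Finset V) := N.powerset.filter (fun S => d < 2 * S.card) with hSs
  set bad : Finset (V → Fin 3) := univ.filter (fun c : V → Fin 3 =>
      d < 2 * (univ.filter (fun y => T x y ∧ c y = c x)).card) with hbad
  have hfilt : ∀ c : V → Fin 3,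
      univ.filter (fun y => T x y ∧ c y = c x) = N.filter (fun y => c y = c x) := by
    intro c; rw [hN, filter_filter]
  clear_value N d n
  have hmaps : ∀ c ∈ bad, N.filter (fun y => c y = c x) ∈ Ssets := by
    intro c hc
    rw [hbad, mem_filter] at hc
    rw [hSs, mem_filter, mem_powerset]
    refine ⟨filter_subset _ _, ?_⟩
    rw [← hfilt c]
    exact hc.2
  have hfib := Finset.card_eq_sum_card_fiberwise hmaps
  clear_value Ssets bad
  have hfibS : ∀ S ∈ Ssets,
      ((bad.filter (fun c => N.filter (fun y => c y = c x) = S)).card : ℝ)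
        ≤ 3 ^ n / (14143/10000) * (14143/15000) ^ d / 2 ^ d := by
    intro S hS
    clear hmaps hfib
    rw [hSs, mem_filter, mem_powerset] at hS
    obtain ⟨hSN, hScard⟩ := hS
    have hSd : S.card ≤ d := by rw [hd]; exact card_le_card hSN
    have hBcard : (N \ S).card = d - S.card := by rw [card_sdiff_of_subset hSN, hd]
    set fib : Finset (V → Fin 3) := bad.filter (fun c => N.filter (fun y => c y = c x) = S)
      with hfibdef
    clear_value fib
    have hsubfib : ∀ a : Fin 3, (fib.filter (fun c => c x = a)).card
        ≤ 2 ^ (d - S.card) * 3 ^ (n - (d + 1)) := by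
      intro a
      have step := count_le x a S (N \ S)
        (fun h => hxN (hSN h)) (fun h => hxN (mem_sdiff.mp h).1) sdiff_disjoint.symm
      rw [hBcard] at step
      have hexp : S.card + (d - S.card) + 1 = d + 1 := by
        rw [Nat.add_sub_cancel' hSd]
      rw [hexp, ← hn] at step
      refine le_trans (card_le_card ?_) step
      intro c hc
      rw [mem_filter] at hc
      obtain ⟨hc1, hcxa⟩ := hc
      rw [hfibdef, mem_filter] at hc1
      obtain ⟨_, hFS⟩ := hc1
      rw [mem_filter]
      refine ⟨mem_univ _, hcxa, ?_, ?_⟩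
      · intro y hy
        have hy' : y ∈ N.filter (fun y => c y = c x) := hFS ▸ hy
        rw [mem_filter] at hy'
        rw [hy'.2, hcxa]
      · intro y hy hya
        rw [mem_sdiff] at hy
        exact hy.2 (hFS ▸ (mem_filter.mpr ⟨hy.1, by rw [hya, hcxa]⟩))
    have hcardfib : (fib.card : ℝ) ≤ 3 * (2 ^ (d - S.card) * 3 ^ (n - (d + 1))) := by
      have hnat : fib.card ≤ 3 * (2 ^ (d - S.card) * 3 ^ (n - (d + 1))) := by
        rw [Finset.card_eq_sum_card_fiberwise
          (f := fun c : V → Fin 3 => c x) (s := fib) (t := univ) (fun c _ => mem_univ _)]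
        calc ∑ a : Fin 3, (fib.filter (fun c => c x = a)).card
            ≤ ∑ _a : Fin 3, 2 ^ (d - S.card) * 3 ^ (n - (d + 1)) :=
              sum_le_sum fun a _ => hsubfib a
          _ = 3 * (2 ^ (d - S.card) * 3 ^ (n - (d + 1))) := by
              rw [sum_const, card_univ, Fintype.card_fin, smul_eq_mul]
      exact_mod_cast hnat
    refine hcardfib.trans ?_
    have happ := pow_step ((14143:ℝ)/10000) (by norm_num) (by norm_num) n d (d - S.card)
      (by omega) hdn
    have hq : (2 * ((14143:ℝ)/10000) / 3) = 14143/15000 := by norm_num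
    rwa [hq] at happ
  have hcount : (bad.card : ℝ)
      ≤ Ssets.card * (3 ^ n / (14143/10000) * (14143/15000) ^ d / 2 ^ d) := by
    rw [hfib]
    push_cast
    calc ∑ S ∈ Ssets, ((bad.filter (fun c => N.filter (fun y => c y = c x) = S)).card : ℝ)
        ≤ ∑ _S ∈ Ssets, 3 ^ n / (14143/10000) * (14143/15000) ^ d / 2 ^ d :=
          sum_le_sum hfibS
      _ = Ssets.card * _ := by rw [sum_const, nsmul_eq_mul]
  have hScard : (Ssets.card : ℝ) ≤ 2 ^ d := by
    have h := card_le_card (filter_subset (fun S => d < 2 * S.card) N.powerset)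
    rw [hSs]
    calc (((N.powerset.filter (fun S => d < 2 * S.card))).card : ℝ)
        ≤ (N.powerset.card : ℝ) := by exact_mod_cast h
      _ = 2 ^ d := by rw [card_powerset, hd]; push_cast; ring
  refine hcount.trans ?_
  have hpos : (0:ℝ) < 3 ^ n / (14143/10000) * (14143/15000) ^ d / 2 ^ d := by positivity
  calc (Ssets.card : ℝ) * (3 ^ n / (14143/10000) * (14143/15000) ^ d / 2 ^ d)
      ≤ 2 ^ d * (3 ^ n / (14143/10000) * (14143/15000) ^ d / 2 ^ d) :=
        mul_le_mul_of_nonneg_right hScard (le_of_lt hpos)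
    _ = 3 ^ n / (14143/10000) * (14143/15000) ^ d := by
        field_simp

open Finset in

lemma degree_count {V : Type*} [Fintype V] [DecidableEq V] (T : V → V → Prop) [DecidableRel T]
    (htot : ∀ u v : V, u ≠ v → (T u v ↔ ¬ T v u)) (t : ℕ) :
    (univ.filter (fun x : V => (univ.filter (fun y => T x y)).card ≤ t)).card ≤ 2 * t + 1 := by
  classical
  set s : Finset V := univ.filter (fun x : V => (univ.filter (fun y => T x y)).card ≤ t) with hs
  set A : Finset (V × V) := s.offDiag.filter (fun p => T p.1 p.2) with hA
  have h1 : s.offDiag.card ≤ 2 * A.card := by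
    have hsplit : A.card + (s.offDiag.filter (fun p : V × V => ¬ T p.1 p.2)).card
        = s.offDiag.card := by
      rw [hA]; exact card_filter_add_card_filter_not _
    have hswap : (s.offDiag.filter (fun p : V × V => ¬ T p.1 p.2)).card ≤ A.card := by
      refine card_le_card_of_injOn (fun p => (p.2, p.1)) ?_ ?_
      · intro p hp
        rw [mem_coe, mem_filter, mem_offDiag] at hp
        obtain ⟨⟨hp1, hp2, hp3⟩, hp4⟩ := hp
        rw [hA, mem_coe, mem_filter, mem_offDiag]
        exact ⟨⟨hp2, hp1, Ne.symm hp3⟩, (htot p.2 p.1 (Ne.symm hp3)).mpr hp4⟩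
      · intro p _ q _ h
        simp only [Prod.mk.injEq] at h
        exact Prod.ext h.2 h.1
    omega
  have h2 : A.card ≤ s.card * t := by
    have hmaps : ∀ p ∈ A, p.1 ∈ s := by
      intro p hp
      rw [hA, mem_filter, mem_offDiag] at hp
      exact hp.1.1
    rw [Finset.card_eq_sum_card_fiberwise hmaps]
    have hbound : ∀ x ∈ s, (A.filter (fun p => p.1 = x)).card ≤ t := by
      intro x hx
      have hinj : (A.filter (fun p => p.1 = x)).card ≤ (univ.filter (fun y => T x y)).card := by
        refine card_le_card_of_injOn (fun p => p.2) ?_ ?_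
        · intro p hp
          rw [mem_coe, mem_filter] at hp
          obtain ⟨hp1, hp2⟩ := hp
          rw [hA, mem_filter] at hp1
          rw [mem_coe, mem_filter]
          exact ⟨mem_univ _, hp2 ▸ hp1.2⟩
        · intro p hp q hq h
          rw [mem_coe, mem_filter] at hp hq
          exact Prod.ext (hp.2.trans hq.2.symm) h
      rw [hs, mem_filter] at hx
      exact hinj.trans hx.2
    calc ∑ x ∈ s, (A.filter (fun p => p.1 = x)).card ≤ ∑ _x ∈ s, t := sum_le_sum hbound
      _ = s.card * t := by rw [sum_const, smul_eq_mul]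
  rw [offDiag_card] at h1
  rcases Nat.eq_zero_or_pos s.card with h0 | hpos
  · omega
  · have : s.card * s.card - s.card = s.card * (s.card - 1) := by
      cases s.card with
      | zero => omega
      | succ k => rw [Nat.succ_sub_one, Nat.mul_succ, Nat.add_sub_cancel]
    rw [this] at h1
    have := h1.trans (by omega : 2 * A.card ≤ 2 * (s.card * t))
    have hkey : s.card * (s.card - 1) ≤ s.card * (2 * t) := by
      calc s.card * (s.card - 1) ≤ 2 * (s.card * t) := this
        _ = s.card * (2 * t) := by ring
    have := Nat.le_of_mul_le_mul_left hkey hpos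
    omega

open Finset in

lemma sum_pow_le {W : Type*} [Fintype W] (dx : W → ℕ)
    (hdlt : ∀ x : W, dx x < Fintype.card W)
    (hdeg : ∀ j : ℕ, ((univ.filter (fun x : W => 2 * dx x ≤ j)).card : ℝ) ≤ j + 1) :
    ∑ x : W, ((9711:ℝ)/10000) ^ (2 * dx x) ≤ 152 := by
  classical
  set r : ℝ := 9711/10000 with hr
  set K : ℕ := 2 * Fintype.card W with hK
  have hr0 : (0:ℝ) < r := by norm_num [hr]
  have hr1 : r < 1 := by norm_num [hr]
  have hrne : r ≠ 1 := by norm_num [hr]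
  -- identity
  have hid : ∀ x : W, r ^ (2 * dx x)
      = (1 - r) * (∑ j ∈ Ico (2 * dx x) K, r ^ j) + r ^ K := by
    intro x
    have hm : 2 * dx x ≤ K := by have := hdlt x; omega
    rw [geom_sum_Ico hrne hm]
    field_simp
    ring
  rw [Finset.sum_congr rfl (fun x _ => hid x), Finset.sum_add_distrib, Finset.sum_const,
    ← Finset.mul_sum]
  -- rewrite inner sums over range K
  have hinner : ∀ x : W, (∑ j ∈ Ico (2 * dx x) K, r ^ j)
      = ∑ j ∈ range K, if 2 * dx x ≤ j then r ^ j else 0 := by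
    intro x
    rw [← Finset.sum_filter]
    apply Finset.sum_congr _ (fun j _ => rfl)
    ext j
    simp only [mem_Ico, mem_filter, mem_range]
    omega
  rw [Finset.sum_congr rfl (fun x _ => hinner x), Finset.sum_comm]
  -- now bound ∑_j ∑_x
  have hcol : ∀ j ∈ range K, (∑ x : W, if 2 * dx x ≤ j then r ^ j else 0)
      ≤ (j + 1 : ℝ) * r ^ j := by
    intro j _
    rw [← Finset.sum_filter, Finset.sum_const, nsmul_eq_mul]
    exact mul_le_mul_of_nonneg_right (hdeg j) (by positivity)
  have hone : ∀ j : ℕ, ((j:ℝ) + 1) * r ^ j ≤ (200/3) * ((203/200) * r) ^ j := by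
    intro j
    have hb := one_add_mul_le_pow (a := (3:ℝ)/200) (by norm_num) j
    have h1 : ((j:ℝ) + 1) * (3/200) ≤ (1 + 3/200) ^ j := by nlinarith
    have h2 : ((j:ℝ) + 1) ≤ (200/3) * (203/200) ^ j := by nlinarith [pow_nonneg (by norm_num : (0:ℝ) ≤ 1 + 3/200) j]
    calc ((j:ℝ) + 1) * r ^ j ≤ ((200:ℝ)/3) * (203/200) ^ j * r ^ j :=
          mul_le_mul_of_nonneg_right h2 (by positivity)
      _ = (200/3) * ((203/200) * r) ^ j := by rw [mul_pow]; ring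
  have hgeom : ∑ j ∈ range K, ((203/200) * r) ^ j ≤ 2000000/28667 := by
    have hs1 : ((203:ℝ)/200) * r ≠ 1 := by norm_num [hr]
    have hseq : ((203:ℝ)/200) * r = 1971333/2000000 := by norm_num [hr]
    rw [geom_sum_eq hs1, hseq,
      div_le_iff_of_neg (by norm_num : ((1971333:ℝ)/2000000 - 1) < 0)]
    nlinarith [pow_nonneg (by norm_num : (0:ℝ) ≤ 1971333/2000000) K]
  have hmain : ∑ j ∈ range K, (∑ x : W, if 2 * dx x ≤ j then r ^ j else 0)
      ≤ (200/3) * (2000000/28667) := by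
    calc ∑ j ∈ range K, (∑ x : W, if 2 * dx x ≤ j then r ^ j else 0)
        ≤ ∑ j ∈ range K, ((j:ℝ) + 1) * r ^ j := Finset.sum_le_sum hcol
      _ ≤ ∑ j ∈ range K, (200/3) * ((203/200) * r) ^ j :=
          Finset.sum_le_sum (fun j _ => hone j)
      _ = (200/3) * ∑ j ∈ range K, ((203/200) * r) ^ j := by rw [Finset.mul_sum]
      _ ≤ (200/3) * (2000000/28667) :=
          mul_le_mul_of_nonneg_left hgeom (by norm_num)
  -- tail
  have htail : ((univ : Finset W).card) • (r ^ K) ≤ (17:ℝ) := by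
    rw [nsmul_eq_mul, card_univ]
    set n : ℕ := Fintype.card W
    have hrK : r ^ K = (r ^ 2) ^ n := by rw [hK, pow_mul]
    have hb := one_add_mul_le_pow (a := (5696479:ℝ)/94303521) (by norm_num) n
    have h17 : (n:ℝ) ≤ 17 * (1 + 5696479/94303521) ^ n := by nlinarith
    have hinv : ((1:ℝ) + 5696479/94303521) * r ^ 2 = 1 := by norm_num [hr]
    have hr2pos : (0:ℝ) < (r ^ 2) ^ n := by positivity
    rw [hrK]
    calc (n:ℝ) * (r ^ 2) ^ n ≤ (17 * (1 + 5696479/94303521) ^ n) * (r ^ 2) ^ n :=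
          mul_le_mul_of_nonneg_right h17 hr2pos.le
      _ = 17 * ((1 + 5696479/94303521) * r ^ 2) ^ n := by rw [mul_pow]; ring
      _ = 17 := by rw [hinv, one_pow, mul_one]
  have h1r : (0:ℝ) ≤ 1 - r := by norm_num [hr]
  calc (1 - r) * ∑ j ∈ range K, (∑ x : W, if 2 * dx x ≤ j then r ^ j else 0)
        + ((univ : Finset W).card) • r ^ K
      ≤ (1 - r) * ((200/3) * (2000000/28667)) + 17 := by
        gcongr
    _ ≤ 152 := by norm_num [hr]
  -- note: smul coercion

/-- If each vertex of a tournament is coloured independently and uniformly at random with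
one of 3 colours, the expected number of bad vertices is less than 206; equivalently,
summing the number of bad vertices over all 3-colourings gives less than 206 · 3^|V|. -/
theorem tournament_expected_bad_lt
    {V : Type*} [Fintype V] [DecidableEq V] (T : V → V → Prop) [DecidableRel T]
    (hirr : ∀ v, ¬ T v v) (htot : ∀ u v : V, u ≠ v → (T u v ↔ ¬ T v u)) :
    ∑ c : V → Fin 3,
      ((Finset.univ.filter (fun x : V =>
        (Finset.univ.filter (fun y => T x y)).card <
          2 * (Finset.univ.filter (fun y => T x y ∧ c y = c x)).card)).card : ℝ)
      < 206 * 3 ^ Fintype.card V := by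
  classical
  open Finset in
  have hswap : (∑ c : V → Fin 3,
      ((Finset.univ.filter (fun x : V =>
        (Finset.univ.filter (fun y => T x y)).card <
          2 * (Finset.univ.filter (fun y => T x y ∧ c y = c x)).card)).card))
      = ∑ x : V, ((Finset.univ.filter (fun c : V → Fin 3 =>
        (Finset.univ.filter (fun y => T x y)).card <
          2 * (Finset.univ.filter (fun y => T x y ∧ c y = c x)).card)).card) := by
    simp_rw [Finset.card_filter]
    exact Finset.sum_comm
  open Finset in
  have hcast : (∑ c : V → Fin 3,
      ((Finset.univ.filter (fun x : V =>
        (Finset.univ.filter (fun y => T x y)).card <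
          2 * (Finset.univ.filter (fun y => T x y ∧ c y = c x)).card)).card : ℝ))
      = ∑ x : V, ((Finset.univ.filter (fun c : V → Fin 3 =>
        (Finset.univ.filter (fun y => T x y)).card <
          2 * (Finset.univ.filter (fun y => T x y ∧ c y = c x)).card)).card : ℝ) := by
    rw [← Nat.cast_sum, hswap, Nat.cast_sum]
  rw [hcast]
  clear hswap hcast
  open Finset in
  set dx : V → ℕ := fun x => (Finset.univ.filter (fun y => T x y)).card with hdx
  clear_value dx
  open Finset in
  have hdlt : ∀ x : V, dx x < Fintype.card V := by
    intro x
    have hxN : x ∉ Finset.univ.filter (fun y => T x y) := by simp [hirr x]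
    have h := card_le_card (subset_univ (insert x (Finset.univ.filter (fun y => T x y))))
    rw [card_insert_of_notMem hxN, card_univ] at h
    simp only [hdx]
    omega
  open Finset in
  have hdeg : ∀ j : ℕ, ((univ.filter (fun x : V => 2 * dx x ≤ j)).card : ℝ) ≤ j + 1 := by
    intro j
    have hfeq : (univ.filter (fun x : V => 2 * dx x ≤ j))
        = (univ.filter (fun x : V => dx x ≤ j / 2)) := by
      apply filter_congr
      intro x _
      omega
    have hdc : (univ.filter (fun x : V => dx x ≤ j / 2)).card ≤ 2 * (j / 2) + 1 := by
      rw [hdx]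
      exact degree_count T htot (j / 2)
    rw [hfeq]
    have h2 : (univ.filter (fun x : V => dx x ≤ j / 2)).card ≤ j + 1 := by omega
    exact_mod_cast h2
  open Finset in
  have hqr : ∀ x : V, ((14143:ℝ)/15000) ^ (dx x) ≤ ((9711:ℝ)/10000) ^ (2 * dx x) := by
    intro x
    have h1 : ((14143:ℝ)/15000) ≤ ((9711:ℝ)/10000) ^ 2 := by norm_num
    calc ((14143:ℝ)/15000) ^ (dx x) ≤ (((9711:ℝ)/10000) ^ 2) ^ (dx x) :=
          pow_le_pow_left₀ (by norm_num) h1 (dx x)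
      _ = ((9711:ℝ)/10000) ^ (2 * dx x) := by rw [← pow_mul]
  open Finset in
  calc ∑ x : V, ((Finset.univ.filter (fun c : V → Fin 3 =>
        (Finset.univ.filter (fun y => T x y)).card <
          2 * (Finset.univ.filter (fun y => T x y ∧ c y = c x)).card)).card : ℝ)
      ≤ ∑ x : V, 3 ^ Fintype.card V / (14143/10000) * ((14143:ℝ)/15000) ^ (dx x) :=
        Finset.sum_le_sum (fun x _ => by
          have hb := bad_count T x (hirr x)
          rw [hdx]
          exact hb)
    _ ≤ ∑ x : V, 3 ^ Fintype.card V / (14143/10000) * ((9711:ℝ)/10000) ^ (2 * dx x) := by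
        refine Finset.sum_le_sum (fun x _ => ?_)
        exact mul_le_mul_of_nonneg_left (hqr x) (by positivity)
    _ = 3 ^ Fintype.card V / (14143/10000) * ∑ x : V, ((9711:ℝ)/10000) ^ (2 * dx x) := by
        rw [Finset.mul_sum]
    _ ≤ 3 ^ Fintype.card V / (14143/10000) * 152 := by
        refine mul_le_mul_of_nonneg_left (sum_pow_le dx hdlt hdeg) (by positivity)
    _ < 206 * 3 ^ Fintype.card V := by
        have h3 : (0:ℝ) < 3 ^ Fintype.card V := by positivity
        nlinarith
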